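/- (Jaakkola–Jordan quadratic bound, per-observation form.) For every x ∈ ℝ, every η ∈ ℝ with η ≠ 0, and every y ∈ {0,1}: y·x − log(1 + exp(x)) ≥ log( exp(η)/(1 + exp(η)) ) − η/2 + (y − 1/2)·x − ( tanh(η/2)/(4η) ) · (x² − η²). -/

import Mathlib

open Real intervalIntegral

lemma hasDerivAt_tanh' (x : ℝ) : HasDerivAt Real.tanh (1 / Real.cosh x ^ 2) x := by
  have h := (Real.hasDerivAt_sinh x).div (Real.hasDerivAt_cosh x) (Real.cosh_pos x).ne'
  have heq : Real.tanh = fun y => Real.sinh y / Real.cosh y :=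
    funext Real.tanh_eq_sinh_div_cosh
  have hd : (Real.cosh x * Real.cosh x - Real.sinh x * Real.sinh x) / Real.cosh x ^ 2
      = 1 / Real.cosh x ^ 2 := by
    rw [show Real.cosh x * Real.cosh x - Real.sinh x * Real.sinh x
        = Real.cosh x ^ 2 - Real.sinh x ^ 2 by ring, Real.cosh_sq_sub_sinh_sq]
  rw [heq]; rw [hd] at h; exact h

lemma continuous_tanh' : Continuous Real.tanh :=
  continuous_iff_continuousAt.2 fun x => (hasDerivAt_tanh' x).continuousAt

lemma concave_tanh : ConcaveOn ℝ (Set.Ici (0:ℝ)) Real.tanh := by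
  apply AntitoneOn.concaveOn_of_deriv (convex_Ici 0) continuous_tanh'.continuousOn
  · exact fun x _ => (hasDerivAt_tanh' x).differentiableAt.differentiableWithinAt
  · intro a ha b hb hab
    rw [interior_Ici] at ha hb
    rw [(hasDerivAt_tanh' a).deriv, (hasDerivAt_tanh' b).deriv]
    apply one_div_le_one_div_of_le (by positivity)
    have : Real.cosh a ≤ Real.cosh b := by
      have habs : |a| ≤ |b| := by
        rw [abs_of_pos (Set.mem_Ioi.1 ha), abs_of_pos (Set.mem_Ioi.1 hb)]; exact hab
      exact Real.cosh_le_cosh.2 habs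
    exact pow_le_pow_left₀ (Real.cosh_pos a).le this 2

lemma chord (t u : ℝ) (ht : 0 < t) (hu0 : 0 ≤ u) (hut : u ≤ t) :
    u * Real.tanh t ≤ t * Real.tanh u := by
  have h := concave_tanh.2 (Set.mem_Ici.2 ht.le) (Set.mem_Ici.2 (le_refl (0:ℝ)))
    (show (0:ℝ) ≤ u / t by positivity)
    (show (0:ℝ) ≤ 1 - u / t by
      have : u / t ≤ 1 := (div_le_one ht).2 hut; linarith)
    (by ring)
  simp only [smul_eq_mul, mul_zero, add_zero, Real.tanh_zero] at h
  rw [div_mul_cancel₀ _ ht.ne'] at h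
  calc u * Real.tanh t = t * (u / t * Real.tanh t) := by field_simp
    _ ≤ t * Real.tanh u := mul_le_mul_of_nonneg_left h ht.le

lemma logcosh_deriv (x : ℝ) :
    HasDerivAt (fun y => Real.log (Real.cosh y)) (Real.tanh x) x := by
  have h := (Real.hasDerivAt_cosh x).log (Real.cosh_pos x).ne'
  rwa [← Real.tanh_eq_sinh_div_cosh] at h

lemma keyE (t s : ℝ) (ht : 0 < t) (hs : 0 ≤ s) :
    Real.log (Real.cosh s) - Real.log (Real.cosh t)
      ≤ Real.tanh t / (2 * t) * (s ^ 2 - t ^ 2) := by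
  have h1 : ∫ u in t..s, Real.tanh u
      = Real.log (Real.cosh s) - Real.log (Real.cosh t) :=
    intervalIntegral.integral_eq_sub_of_hasDerivAt (fun u _ => logcosh_deriv u)
      (continuous_tanh'.intervalIntegrable t s)
  have h2 : ∫ u in t..s, (Real.tanh t / t) * u
      = Real.tanh t / t * ((s ^ 2 - t ^ 2) / 2) := by
    rw [intervalIntegral.integral_const_mul, integral_id]
  have hle : ∫ u in t..s, Real.tanh u ≤ ∫ u in t..s, (Real.tanh t / t) * u := by
    rcases le_total t s with hts | hts
    · apply intervalIntegral.integral_mono_on hts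
        (continuous_tanh'.intervalIntegrable t s)
        ((continuous_const.mul continuous_id).intervalIntegrable t s)
      intro u hu
      have h := chord u t (ht.trans_le hu.1) ht.le hu.1
      simp only [Pi.mul_apply, id_eq]
      rw [div_mul_eq_mul_div, le_div_iff₀ ht]
      nlinarith [h]
    · have h' : ∫ u in s..t, (Real.tanh t / t) * u ≤ ∫ u in s..t, Real.tanh u := by
        apply intervalIntegral.integral_mono_on hts
          ((continuous_const.mul continuous_id).intervalIntegrable s t)
          (continuous_tanh'.intervalIntegrable s t)
        intro u hu
        have h := chord t u ht (hs.trans hu.1) hu.2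
        simp only [Pi.mul_apply, id_eq]
        rw [div_mul_eq_mul_div, div_le_iff₀ ht]
        nlinarith [h]
      rw [intervalIntegral.integral_symm s t, intervalIntegral.integral_symm s t]
      linarith
  have heq : Real.tanh t / (2 * t) * (s ^ 2 - t ^ 2)
      = Real.tanh t / t * ((s ^ 2 - t ^ 2) / 2) := by
    ring
  rw [heq]; linarith [h1 ▸ h2 ▸ hle]

lemma log_one_add_exp (z : ℝ) :
    Real.log (1 + Real.exp z)
      = z / 2 + Real.log 2 + Real.log (Real.cosh (z / 2)) := by
  have e1 : Real.exp (z / 2) * Real.exp (z / 2) = Real.exp z := by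
    rw [← Real.exp_add]; ring_nf
  have e2 : Real.exp (z / 2) * Real.exp (-(z / 2)) = 1 := by
    rw [← Real.exp_add]; simp
  have h : 1 + Real.exp z = Real.exp (z / 2) * (2 * Real.cosh (z / 2)) := by
    rw [Real.cosh_eq]; linear_combination -e1 - e2
  rw [h, Real.log_mul (Real.exp_pos _).ne' (by positivity), Real.log_exp,
    Real.log_mul two_ne_zero (Real.cosh_pos _).ne']
  ring

theorem stmt_9 (x η y : ℝ) (hη : η ≠ 0) (hy : y = 0 ∨ y = 1) :
    y * x - Real.log (1 + Real.exp x)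
      ≥ Real.log (Real.exp η / (1 + Real.exp η)) - η / 2 + (y - 1 / 2) * x
        - (Real.tanh (η / 2) / (4 * η)) * (x ^ 2 - η ^ 2) := by
  have habs : (0:ℝ) < |η| := abs_pos.2 hη
  set s : ℝ := |x| / 2 with hs_def
  set t : ℝ := |η| / 2 with ht_def
  have ht : 0 < t := by positivity
  have hs : 0 ≤ s := by positivity
  have hE := keyE t s ht hs
  have hcx : Real.log (Real.cosh (x / 2)) = Real.log (Real.cosh s) := by
    rw [hs_def, show |x| / 2 = |x / 2| by rw [abs_div]; norm_num, Real.cosh_abs]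
  have hct : Real.log (Real.cosh (η / 2)) = Real.log (Real.cosh t) := by
    rw [ht_def, show |η| / 2 = |η / 2| by rw [abs_div]; norm_num, Real.cosh_abs]
  have hodd : Real.tanh t / (2 * t) = Real.tanh (η / 2) / η := by
    rw [ht_def]
    rcases abs_cases η with ⟨h1, _⟩ | ⟨h1, _⟩
    · rw [h1]; ring
    · rw [h1, show -η / 2 = -(η / 2) by ring, Real.tanh_neg]
      ring
  have hcc : Real.tanh (η / 2) / (4 * η) * (x ^ 2 - η ^ 2)
      = Real.tanh t / (2 * t) * (s ^ 2 - t ^ 2) := by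
    rw [hodd, hs_def, ht_def]
    have hx2 : (|x| / 2) ^ 2 = x ^ 2 / 4 := by rw [div_pow, sq_abs]; norm_num
    have he2 : (|η| / 2) ^ 2 = η ^ 2 / 4 := by rw [div_pow, sq_abs]; norm_num
    rw [hx2, he2]; ring
  have hlogfrac : Real.log (Real.exp η / (1 + Real.exp η))
      = η - Real.log (1 + Real.exp η) := by
    rw [Real.log_div (Real.exp_pos η).ne' (by positivity), Real.log_exp]
  rw [ge_iff_le, hlogfrac, hcc, log_one_add_exp x, log_one_add_exp η, hcx, hct,
    show (y - 1 / 2) * x = y * x - x / 2 by ring]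
  linarith
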